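/- Let A be the 4×4 complex matrix [[0, −iτξ₁, −iτξ₃ᵖ, iρ_f⁻¹ξ₃ᶠ], [0, −i(2μ_sξ₁² − ρ_sτ²), −2iμ_sξ₁ξ₃ᵖ, 0], [i(μ_sξ₁² − ρ_sτ²), 0, 0, 0], [0, −2iμ_sξ₁ξ₃ˢ, i(2μ_sξ₁² − ρ_sτ²), −iτ]] (the Douglis–Nirenberg principal symbol of the outgoing hyperbolic-hyperbolic transmission operator). Then det A = (ρ_sτ² − μ_sξ₁²)·(τ⁴ρ_sξ₃ᵖ + ρ_f⁻¹ξ₃ᶠ((2μ_sξ₁² − ρ_sτ²)² + 4μ_s²ξ₁²ξ₃ˢξ₃ᵖ)); since ρ_sτ² > μ_sξ₁² in this region, A is invertible. -/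

import Mathlib

open Complex

/-- Determinant of the 4×4 Douglis–Nirenberg principal symbol of the
outgoing hyperbolic-hyperbolic transmission operator, and its invertibility. -/
theorem det_DN_symbol_hyperbolic_hyperbolic
    (lams mus rhos lamf rhof : ℝ)
    (hlams : 0 < lams) (hmus : 0 < mus) (hrhos : 0 < rhos)
    (hlamf : 0 < lamf) (hrhof : 0 < rhof)
    (cs cp cf : ℝ)
    (hcs : cs = Real.sqrt (mus / rhos))
    (hcp : cp = Real.sqrt ((lams + 2 * mus) / rhos))
    (hcf : cf = Real.sqrt (lamf / rhof))
    (ξ1 τ : ℝ) (hτ : τ ≠ 0)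
    (hhp : cp ^ 2 * ξ1 ^ 2 < τ ^ 2)
    (hhf : cf ^ 2 * ξ1 ^ 2 < τ ^ 2)
    (ξ3s ξ3p ξ3f : ℝ)
    (hξ3s : ξ3s = Real.sqrt (τ ^ 2 / cs ^ 2 - ξ1 ^ 2))
    (hξ3p : ξ3p = Real.sqrt (τ ^ 2 / cp ^ 2 - ξ1 ^ 2))
    (hξ3f : ξ3f = Real.sqrt (τ ^ 2 / cf ^ 2 - ξ1 ^ 2))
    (A : Matrix (Fin 4) (Fin 4) ℂ)
    (hA : A = !![0, -(Complex.I * τ * ξ1), -(Complex.I * τ * ξ3p), Complex.I * rhof⁻¹ * ξ3f;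
                 0, -(Complex.I * (2 * mus * ξ1 ^ 2 - rhos * τ ^ 2)),
                    -(2 * Complex.I * mus * ξ1 * ξ3p), 0;
                 Complex.I * (mus * ξ1 ^ 2 - rhos * τ ^ 2), 0, 0, 0;
                 0, -(2 * Complex.I * mus * ξ1 * ξ3s),
                    Complex.I * (2 * mus * ξ1 ^ 2 - rhos * τ ^ 2), -(Complex.I * τ)]) :
    A.det = ((rhos * τ ^ 2 - mus * ξ1 ^ 2 : ℝ) : ℂ)
        * ((τ ^ 4 * rhos * ξ3p
            + rhof⁻¹ * ξ3f * ((2 * mus * ξ1 ^ 2 - rhos * τ ^ 2) ^ 2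
                + 4 * mus ^ 2 * ξ1 ^ 2 * ξ3s * ξ3p) : ℝ) : ℂ)
      ∧ mus * ξ1 ^ 2 < rhos * τ ^ 2
      ∧ IsUnit A := by
  -- basic positivity of the speeds
  have hcp2 : cp ^ 2 = (lams + 2 * mus) / rhos := by
    rw [hcp, Real.sq_sqrt (by positivity)]
  have hcs2 : cs ^ 2 = mus / rhos := by
    rw [hcs, Real.sq_sqrt (by positivity)]
  have hcf2 : cf ^ 2 = lamf / rhof := by
    rw [hcf, Real.sq_sqrt (by positivity)]
  have hcp2pos : 0 < cp ^ 2 := by rw [hcp2]; positivity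
  have hcs2pos : 0 < cs ^ 2 := by rw [hcs2]; positivity
  have hcf2pos : 0 < cf ^ 2 := by rw [hcf2]; positivity
  have hp : 0 < τ ^ 2 / cp ^ 2 - ξ1 ^ 2 := by
    rw [sub_pos, lt_div_iff₀ hcp2pos]; linarith [hhp]
  have hcscp : cs ^ 2 ≤ cp ^ 2 := by
    rw [hcs2, hcp2]
    gcongr
    linarith
  have hs : 0 < τ ^ 2 / cs ^ 2 - ξ1 ^ 2 := by
    have : τ ^ 2 / cp ^ 2 ≤ τ ^ 2 / cs ^ 2 :=
      div_le_div_of_nonneg_left (by positivity) hcs2pos hcscp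
    linarith
  have hf : 0 < τ ^ 2 / cf ^ 2 - ξ1 ^ 2 := by
    rw [sub_pos, lt_div_iff₀ hcf2pos]; linarith [hhf]
  have hξ3ppos : 0 < ξ3p := by rw [hξ3p]; exact Real.sqrt_pos.mpr hp
  have hξ3spos : 0 < ξ3s := by rw [hξ3s]; exact Real.sqrt_pos.mpr hs
  have hξ3fpos : 0 < ξ3f := by rw [hξ3f]; exact Real.sqrt_pos.mpr hf
  have hineq : mus * ξ1 ^ 2 < rhos * τ ^ 2 := by
    have h1 : cs ^ 2 * ξ1 ^ 2 ≤ cp ^ 2 * ξ1 ^ 2 :=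
      mul_le_mul_of_nonneg_right hcscp (by positivity)
    have h2 : cs ^ 2 * ξ1 ^ 2 < τ ^ 2 := lt_of_le_of_lt h1 hhp
    rw [hcs2, div_mul_eq_mul_div] at h2
    have := (div_lt_iff₀ hrhos).mp h2
    linarith
  have hdet : A.det = ((rhos * τ ^ 2 - mus * ξ1 ^ 2 : ℝ) : ℂ)
        * ((τ ^ 4 * rhos * ξ3p
            + rhof⁻¹ * ξ3f * ((2 * mus * ξ1 ^ 2 - rhos * τ ^ 2) ^ 2
                + 4 * mus ^ 2 * ξ1 ^ 2 * ξ3s * ξ3p) : ℝ) : ℂ) := by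
    subst hA
    simp [Matrix.det_succ_row_zero, Fin.sum_univ_succ]
    simp (config := {decide := true}) [Fin.succAbove]
    ring_nf
    simp only [Complex.I_sq, Complex.I_pow_four]
    push_cast
    ring
  refine ⟨hdet, hineq, ?_⟩
  rw [Matrix.isUnit_iff_isUnit_det, isUnit_iff_ne_zero, hdet]
  have h1 : (0 : ℝ) < rhos * τ ^ 2 - mus * ξ1 ^ 2 := by linarith
  have h2 : (0 : ℝ) < τ ^ 4 * rhos * ξ3p
      + rhof⁻¹ * ξ3f * ((2 * mus * ξ1 ^ 2 - rhos * τ ^ 2) ^ 2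
          + 4 * mus ^ 2 * ξ1 ^ 2 * ξ3s * ξ3p) := by
    have hτ4 : 0 < τ ^ 4 := by positivity
    have : 0 ≤ rhof⁻¹ * ξ3f * ((2 * mus * ξ1 ^ 2 - rhos * τ ^ 2) ^ 2
          + 4 * mus ^ 2 * ξ1 ^ 2 * ξ3s * ξ3p) := by positivity
    have hpos : 0 < τ ^ 4 * rhos * ξ3p := by positivity
    linarith
  exact mul_ne_zero (by exact_mod_cast h1.ne') (by exact_mod_cast h2.ne')
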